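/- arXiv:1406.3942 — 2 statements merged into one kernel-verified Lean document; each statement's English description precedes it below -/
import Mathlib

section
/- For countable ordinals α < β, every Σ⁰_α-function between topological spaces is also a Σ⁰_β-function. -/
/-- The Borel hierarchy: `Σ⁰₀ = {∅}`, `Σ⁰₁` = open sets, `Σ⁰₂` = countable unions of
differences of open sets, and for `α > 2`, `Σ⁰_α` = countable unions of complements of
sets from lower levels. -/
noncomputable def SigmaO (X : Type*) [TopologicalSpace X] : Ordinal → Set (Set X) :=
  WellFounded.fix Ordinal.lt_wf fun α ih =>
    if α = 0 then {(∅ : Set X)}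
    else if α = 1 then {s | IsOpen s}
    else if α = 2 then
      {s | ∃ f g : ℕ → Set X, (∀ n, IsOpen (f n) ∧ IsOpen (g n)) ∧ s = ⋃ n, f n \ g n}
    else
      {s | ∃ (β : ℕ → Ordinal) (A : ℕ → Set X),
        (∀ n, ∃ h : β n < α, A n ∈ ih (β n) h) ∧ s = ⋃ n, (A n)ᶜ}

/-- The dual classes `Π⁰_α`. -/
noncomputable def PiO (X : Type*) [TopologicalSpace X] (α : Ordinal) : Set (Set X) :=
  {s | sᶜ ∈ SigmaO X α}

theorem SigmaO_def (X : Type*) [TopologicalSpace X] (α : Ordinal) :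
    SigmaO X α =
      if α = 0 then {(∅ : Set X)}
      else if α = 1 then {s | IsOpen s}
      else if α = 2 then
        {s | ∃ f g : ℕ → Set X, (∀ n, IsOpen (f n) ∧ IsOpen (g n)) ∧ s = ⋃ n, f n \ g n}
      else
        {s | ∃ (β : ℕ → Ordinal) (A : ℕ → Set X),
          (∀ n, ∃ _ : β n < α, A n ∈ SigmaO X (β n)) ∧ s = ⋃ n, (A n)ᶜ} := by
  rw [SigmaO, WellFounded.fix_eq]

section Helpers

variable {X : Type*} [TopologicalSpace X]

theorem mem_sigmaO_one {s : Set X} : s ∈ SigmaO X 1 ↔ IsOpen s := by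
  rw [SigmaO_def]; norm_num

theorem mem_sigmaO_two {s : Set X} : s ∈ SigmaO X 2 ↔
    ∃ f g : ℕ → Set X, (∀ n, IsOpen (f n) ∧ IsOpen (g n)) ∧ s = ⋃ n, f n \ g n := by
  rw [SigmaO_def]; norm_num

theorem mem_sigmaO_of_three {α : Ordinal} (h0 : α ≠ 0) (h1 : α ≠ 1) (h2 : α ≠ 2) {s : Set X} :
    s ∈ SigmaO X α ↔ ∃ (β : ℕ → Ordinal) (A : ℕ → Set X),
      (∀ n, β n < α ∧ A n ∈ SigmaO X (β n)) ∧ s = ⋃ n, (A n)ᶜ := by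
  rw [SigmaO_def]; simp only [h0, h1, h2, if_false]
  constructor
  · rintro ⟨β, A, h, rfl⟩; exact ⟨β, A, fun n => ⟨(h n).1, (h n).2⟩, rfl⟩
  · rintro ⟨β, A, h, rfl⟩; exact ⟨β, A, fun n => ⟨(h n).1, (h n).2⟩, rfl⟩

theorem lt_two_cases {γ : Ordinal} (h : γ < 2) : γ = 0 ∨ γ = 1 := by
  have h2 : (2 : Ordinal) = Order.succ 1 := by
    rw [← Ordinal.add_one_eq_succ, one_add_one_eq_two]
  rw [h2, Order.lt_succ_iff] at h
  rcases eq_or_lt_of_le h with rfl | h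
  · exact Or.inr rfl
  · exact Or.inl (Ordinal.lt_one_iff_zero.mp h)

theorem two_lt_of_ne {δ : Ordinal} (h0 : δ ≠ 0) (h1 : δ ≠ 1) (h2 : δ ≠ 2) : 2 < δ := by
  rcases lt_trichotomy 2 δ with h | h | h
  · exact h
  · exact absurd h.symm h2
  · rcases lt_two_cases h with rfl | rfl
    · exact absurd rfl h0
    · exact absurd rfl h1

theorem closed_mem_sigmaO_two {s : Set X} (hs : IsClosed s) : s ∈ SigmaO X 2 :=
  mem_sigmaO_two.mpr ⟨fun _ => Set.univ, fun _ => sᶜ,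
    fun _ => ⟨isOpen_univ, hs.isOpen_compl⟩, by
      simp only [Set.diff_eq, compl_compl, Set.univ_inter, Set.iUnion_const]⟩

theorem compl_union_mem_sigmaO_two {u v : Set X} (hu : IsOpen u) (hv : IsOpen v) :
    uᶜ ∪ v ∈ SigmaO X 2 := by
  rw [mem_sigmaO_two]
  refine ⟨fun n => if n = 0 then Set.univ else v, fun n => if n = 0 then u else ∅,
    fun n => by dsimp only; split <;> simp [hu, hv], ?_⟩
  ext x
  simp only [Set.mem_union, Set.mem_iUnion, Set.mem_diff, Set.mem_compl_iff]
  constructor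
  · rintro (h | h)
    · exact ⟨0, by simp [h]⟩
    · exact ⟨1, by simp [h]⟩
  · rintro ⟨n, hn⟩
    by_cases h : n = 0 <;> simp [h] at hn <;> tauto

theorem sigmaO_mono {γ δ : Ordinal} (h : γ ≤ δ) : SigmaO X γ ⊆ SigmaO X δ := by
  rcases eq_or_lt_of_le h with rfl | hlt
  · exact subset_rfl
  intro s hs
  by_cases hδ0 : δ = 0
  · exact absurd (hδ0 ▸ hlt) (fun h' => lt_irrefl _ (lt_of_le_of_lt (zero_le (a := γ)) h'))
  by_cases hδ1 : δ = 1
  · subst hδ1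
    have : γ = 0 := Ordinal.lt_one_iff_zero.mp hlt
    subst this
    rw [SigmaO_def] at hs; simp at hs; subst hs
    exact mem_sigmaO_one.mpr isOpen_empty
  by_cases hδ2 : δ = 2
  · subst hδ2
    rcases lt_two_cases hlt with rfl | rfl
    · rw [SigmaO_def] at hs; simp at hs; subst hs
      exact mem_sigmaO_two.mpr ⟨fun _ => ∅, fun _ => ∅,
        fun _ => ⟨isOpen_empty, isOpen_empty⟩, by simp⟩
    · exact mem_sigmaO_two.mpr ⟨fun _ => s, fun _ => ∅,
        fun _ => ⟨mem_sigmaO_one.mp hs, isOpen_empty⟩, by simp [Set.iUnion_const]⟩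
  · -- δ ≥ 3
    have h2δ : (2 : Ordinal) < δ := two_lt_of_ne hδ0 hδ1 hδ2
    have h1δ : (1 : Ordinal) < δ := lt_trans one_lt_two h2δ
    rw [mem_sigmaO_of_three hδ0 hδ1 hδ2]
    by_cases hγ0 : γ = 0
    · subst hγ0
      rw [SigmaO_def] at hs; simp at hs; subst hs
      exact ⟨fun _ => 1, fun _ => Set.univ,
        fun _ => ⟨h1δ, mem_sigmaO_one.mpr isOpen_univ⟩, by simp⟩
    by_cases hγ1 : γ = 1
    · subst hγ1
      exact ⟨fun _ => 2, fun _ => sᶜ,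
        fun _ => ⟨h2δ, closed_mem_sigmaO_two (mem_sigmaO_one.mp hs).isClosed_compl⟩,
        by simp [Set.iUnion_const]⟩
    by_cases hγ2 : γ = 2
    · subst hγ2
      obtain ⟨F, G, hFG, rfl⟩ := mem_sigmaO_two.mp hs
      refine ⟨fun _ => 2, fun n => (F n)ᶜ ∪ G n,
        fun n => ⟨h2δ, compl_union_mem_sigmaO_two (hFG n).1 (hFG n).2⟩, ?_⟩
      simp [Set.compl_union, Set.diff_eq]
    · obtain ⟨β, A, hβA, rfl⟩ := (mem_sigmaO_of_three hγ0 hγ1 hγ2).mp hs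
      exact ⟨β, A, fun n => ⟨lt_trans (hβA n).1 hlt, (hβA n).2⟩, rfl⟩

end Helpers

/-- For countable ordinals `1 ≤ α < β`, every `Σ⁰_α`-function is a `Σ⁰_β`-function. -/
theorem sigma_function_mono {X Y : Type*} [TopologicalSpace X] [TopologicalSpace Y]
    (α β : Ordinal) (hα : 1 ≤ α) (hαβ : α < β) (hβ : β < (Cardinal.aleph 1).ord)
    (f : X → Y) (hf : ∀ A ∈ SigmaO Y α, f ⁻¹' A ∈ SigmaO X α) :
    ∀ A ∈ SigmaO Y β, f ⁻¹' A ∈ SigmaO X β := by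
  have key : ∀ δ : Ordinal, α ≤ δ → ∀ A ∈ SigmaO Y δ, f ⁻¹' A ∈ SigmaO X δ := by
    intro δ
    induction δ using Ordinal.induction with
    | h δ IH =>
      intro hαδ A hA
      rcases eq_or_lt_of_le hαδ with rfl | hlt
      · exact hf A hA
      have hδ0 : δ ≠ 0 := fun h => lt_irrefl _ (lt_of_le_of_lt (zero_le (a := α)) (h ▸ hlt))
      have hδ1 : δ ≠ 1 := fun h => absurd (h ▸ hlt) (not_lt.mpr hα)
      by_cases hδ2 : δ = 2
      · subst hδ2
        have hα1 : α = 1 := le_antisymm (by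
          rcases lt_two_cases hlt with rfl | rfl
          · exact absurd hα (by norm_num)
          · exact le_refl 1) hα
        subst hα1
        obtain ⟨F, G, hFG, rfl⟩ := mem_sigmaO_two.mp hA
        refine mem_sigmaO_two.mpr ⟨fun n => f ⁻¹' F n, fun n => f ⁻¹' G n,
          fun n => ⟨mem_sigmaO_one.mp (hf _ (mem_sigmaO_one.mpr (hFG n).1)),
            mem_sigmaO_one.mp (hf _ (mem_sigmaO_one.mpr (hFG n).2))⟩, ?_⟩
        simp [Set.preimage_iUnion, Set.preimage_diff]
      · obtain ⟨γ, A', hγA, rfl⟩ := (mem_sigmaO_of_three hδ0 hδ1 hδ2).mp hA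
        refine (mem_sigmaO_of_three hδ0 hδ1 hδ2).mpr
          ⟨fun n => max (γ n) α, fun n => f ⁻¹' A' n, fun n => ⟨max_lt (hγA n).1 hlt, ?_⟩, ?_⟩
        · exact IH _ (max_lt (hγA n).1 hlt) (le_max_right _ _)
            _ (sigmaO_mono (le_max_left _ _) (hγA n).2)
        · simp [Set.preimage_iUnion]
  exact key β (le_of_lt hαβ)
end

section
/- In the h-preorder on countable 2-trees without infinite chains, the canonical trees T_α and their label-swapped versions T̄_α satisfy: for all α < β < ω₁, T_α ⊔ T̄_α <_h T_β, and T_α, T̄_α are ≤_h-incomparable. -/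
/-- A countable labeled poset with labels in `Fin k`. -/
structure LPoset (k : ℕ) where
  carrier : Type
  [po : PartialOrder carrier]
  [cnt : Countable carrier]
  label : carrier → Fin k

attribute [instance] LPoset.po LPoset.cnt

namespace LPoset

/-- The h-preorder: existence of a monotone label-preserving map. -/
def Hle {k : ℕ} (P Q : LPoset k) : Prop :=
  ∃ f : P.carrier → Q.carrier, Monotone f ∧ ∀ x, Q.label (f x) = P.label x

/-- h-equivalence. -/
def Heq {k : ℕ} (P Q : LPoset k) : Prop := P.Hle Q ∧ Q.Hle P

/-- Strict h-order. -/
def Hlt {k : ℕ} (P Q : LPoset k) : Prop := P.Hle Q ∧ ¬ Q.Hle P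

/-- The label-swapped version of a 2-labeled poset. -/
def bar (P : LPoset 2) : LPoset 2 :=
  { carrier := P.carrier, label := fun x => 1 - P.label x }

/-- `p₀(P)`: adjoin a new greatest element labeled `0`. -/
def p0 (P : LPoset 2) : LPoset 2 :=
  { carrier := WithTop P.carrier,
    label := fun x => WithTop.recTopCoe 0 P.label x }

/-- Countable disjoint union of labeled posets (no order relations across components). -/
def unionN {k : ℕ} (F : ℕ → LPoset k) : LPoset k :=
  { carrier := Σ n, (F n).carrier, label := fun p => (F p.1).label p.2 }

/-- Binary disjoint union. -/
def sum {k : ℕ} (P Q : LPoset k) : LPoset k :=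
  { carrier := P.carrier ⊕ Q.carrier, label := Sum.elim P.label Q.label }

/-- The singleton poset labeled `i`. -/
def single {k : ℕ} (i : Fin k) : LPoset k :=
  { carrier := PUnit, label := fun _ => i }

end LPoset

/-- An ordinal is *even* if it is `l + n` with `l` zero or limit and `n` even. -/
def OrdEven (α : Ordinal) : Prop :=
  ∃ (l : Ordinal) (n : ℕ), (l = 0 ∨ Order.IsSuccLimit l) ∧ α = l + n ∧ Even n


section Helpers

namespace LPoset

variable {k : ℕ}

theorem htrans {P Q R : LPoset k} (h1 : P.Hle Q) (h2 : Q.Hle R) : P.Hle R := by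
  obtain ⟨f, hf, hfl⟩ := h1
  obtain ⟨g, hg, hgl⟩ := h2
  exact ⟨g ∘ f, hg.comp hf, fun x => by simp only [Function.comp_apply, hgl, hfl]⟩

theorem bar_mono {P Q : LPoset 2} (h : P.Hle Q) : P.bar.Hle Q.bar := by
  obtain ⟨f, hf, hfl⟩ := h
  exact ⟨f, hf, fun x => by show 1 - Q.label (f x) = 1 - P.label x; exact congrArg (fun l => 1 - l) (hfl x)⟩

theorem hle_bar_bar (P : LPoset 2) : P.Hle P.bar.bar :=
  ⟨id, monotone_id, fun x => by
    show 1 - (1 - P.label x) = P.label x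
    have h : ∀ l : Fin 2, 1 - (1 - l) = l := by decide
    exact h _⟩

theorem bar_bar_hle (P : LPoset 2) : P.bar.bar.Hle P :=
  ⟨id, monotone_id, fun x => by
    show P.label x = 1 - (1 - P.label x)
    have h : ∀ l : Fin 2, l = 1 - (1 - l) := by decide
    exact h _⟩

theorem not_bar_hle {P : LPoset 2} (h : ¬ P.Hle P.bar) : ¬ P.bar.Hle P := fun hb =>
  h (htrans (hle_bar_bar P) (bar_mono hb))

theorem hle_p0 (P : LPoset 2) : P.Hle (p0 P) :=
  ⟨fun x => (x : WithTop P.carrier), fun _ _ h => WithTop.coe_le_coe.mpr h, fun _ => rfl⟩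

theorem p0_mono {P Q : LPoset 2} (h : P.Hle Q) : (p0 P).Hle (p0 Q) := by
  obtain ⟨f, hf, hfl⟩ := h
  refine ⟨WithTop.map f, hf.withTop_map, ?_⟩
  intro x
  induction x using WithTop.recTopCoe with
  | top => rfl
  | coe x => exact hfl x

theorem single_zero_hle_p0 (Y : LPoset 2) : (single 0).Hle (p0 Y) :=
  ⟨fun _ => (⊤ : WithTop Y.carrier), monotone_const, fun _ => rfl⟩

theorem hle_sum_left (P Q : LPoset k) : P.Hle (sum P Q) :=
  ⟨Sum.inl, fun _ _ h => Sum.inl_le_inl_iff.mpr h, fun _ => rfl⟩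

theorem hle_sum_right (P Q : LPoset k) : Q.Hle (sum P Q) :=
  ⟨Sum.inr, fun _ _ h => Sum.inr_le_inr_iff.mpr h, fun _ => rfl⟩

theorem sum_hle {P Q R : LPoset k} (h1 : P.Hle R) (h2 : Q.Hle R) : (sum P Q).Hle R := by
  obtain ⟨f, hf, hfl⟩ := h1
  obtain ⟨g, hg, hgl⟩ := h2
  refine ⟨Sum.elim f g, ?_, ?_⟩
  · intro a b hab
    cases a with
    | inl a =>
      cases b with
      | inl b => exact hf (Sum.inl_le_inl_iff.mp hab)
      | inr b => exact absurd hab Sum.not_inl_le_inr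
    | inr a =>
      cases b with
      | inl b => exact absurd hab Sum.not_inr_le_inl
      | inr b => exact hg (Sum.inr_le_inr_iff.mp hab)
  · rintro (x | x)
    exacts [hfl x, hgl x]

theorem hle_unionN (F : ℕ → LPoset k) (m : ℕ) : (F m).Hle (unionN F) :=
  ⟨fun x => (⟨m, x⟩ : Σ n, (F n).carrier), fun _ _ h => (Sigma.mk_le_mk_iff (α := fun n => (F n).carrier)).mpr h, fun _ => rfl⟩

theorem sigma_le_mk {α : ℕ → Type} [∀ i, PartialOrder (α i)] {x : Σ i, α i} {m : ℕ} {u : α m}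
    (h : x ≤ ⟨m, u⟩) : ∃ v : α m, x = ⟨m, v⟩ ∧ v ≤ u := by
  obtain ⟨n, w⟩ := x
  obtain ⟨h1, h2⟩ := Sigma.le_def.mp h
  dsimp at h1
  subst h1
  exact ⟨w, rfl, h2⟩

theorem unionN_hle {F : ℕ → LPoset k} {R : LPoset k} (h : ∀ n, (F n).Hle R) :
    (unionN F).Hle R := by
  choose f hf hfl using h
  refine ⟨fun p => f p.1 p.2, ?_, fun p => hfl p.1 p.2⟩
  rintro ⟨n, x⟩ ⟨n', y⟩ hxy
  obtain ⟨v, hv, hvy⟩ := sigma_le_mk hxy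
  obtain ⟨rfl, hx⟩ := Sigma.mk.inj_iff.mp hv
  cases eq_of_heq hx
  exact hf n hvy

theorem bar_unionN_hle (F : ℕ → LPoset 2) :
    (bar (unionN F)).Hle (unionN fun n => bar (F n)) :=
  ⟨id, fun _ _ h => h, fun _ => rfl⟩

/-- If `p₀(X) ≤ₕ bar (p₀ Y)`, then `p₀(X) ≤ₕ bar Y` : the root of `p₀ X` is labeled `0`
while the top of `bar (p₀ Y)` is labeled `1`, so the whole image lies inside `bar Y`. -/
theorem p0_hle_bar_of_p0_hle_bar_p0 {X Y : LPoset 2}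
    (h : (p0 X).Hle (bar (p0 Y))) : (p0 X).Hle (bar Y) := by
  obtain ⟨f, hf, hfl⟩ := h
  have hf' : ∀ a b : WithTop X.carrier, a ≤ b → f a ≤ f b := fun _ _ hab => hf hab
  have htop : f (⊤ : WithTop X.carrier) ≠ (⊤ : WithTop Y.carrier) := by
    intro he
    have h1 := hfl (⊤ : WithTop X.carrier)
    rw [he] at h1
    have h2 : (1 : Fin 2) - 0 = 0 := h1
    exact absurd h2 (by decide)
  obtain ⟨u, hu⟩ := WithTop.ne_top_iff_exists.mp htop
  have hall : ∀ z : WithTop X.carrier, ∃ v : Y.carrier, f z = (v : WithTop Y.carrier) := by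
    intro z
    have hz : f z ≤ f (⊤ : WithTop X.carrier) := hf' z ⊤ le_top
    rw [← hu] at hz
    obtain ⟨v, hv⟩ := WithTop.ne_top_iff_exists.mp
      (fun he => WithTop.not_top_le_coe u (he ▸ hz))
    exact ⟨v, hv.symm⟩
  choose g hg using hall
  refine ⟨g, ?_, ?_⟩
  · intro a b hab
    have h1 := hf' a b hab
    rw [hg a, hg b] at h1
    exact WithTop.coe_le_coe.mp h1
  · intro z
    have h1 := hfl z
    rw [hg z] at h1
    exact h1

/-- A map from `p₀ X` into a binary disjoint union lands in a single component. -/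
theorem p0_hle_of_hle_sum {X P Q : LPoset 2} (h : (p0 X).Hle (sum P Q)) :
    (p0 X).Hle P ∨ (p0 X).Hle Q := by
  obtain ⟨f, hf, hfl⟩ := h
  have hf' : ∀ a b : WithTop X.carrier, a ≤ b → f a ≤ f b := fun _ _ hab => hf hab
  cases htop : f (⊤ : WithTop X.carrier) with
  | inl u =>
    left
    have hall : ∀ z : WithTop X.carrier, ∃ v : P.carrier, f z = Sum.inl v := by
      intro z
      have hz : f z ≤ f (⊤ : WithTop X.carrier) := hf' z ⊤ le_top
      rw [htop] at hz
      cases hfz : f z with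
      | inl v => exact ⟨v, rfl⟩
      | inr v => rw [hfz] at hz; exact absurd hz Sum.not_inr_le_inl
    choose g hg using hall
    refine ⟨g, ?_, ?_⟩
    · intro a b hab
      have h1 := hf' a b hab
      rw [hg a, hg b] at h1
      exact Sum.inl_le_inl_iff.mp h1
    · intro z
      have h1 := hfl z
      rw [hg z] at h1
      exact h1
  | inr u =>
    right
    have hall : ∀ z : WithTop X.carrier, ∃ v : Q.carrier, f z = Sum.inr v := by
      intro z
      have hz : f z ≤ f (⊤ : WithTop X.carrier) := hf' z ⊤ le_top
      rw [htop] at hz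
      cases hfz : f z with
      | inr v => exact ⟨v, rfl⟩
      | inl v => rw [hfz] at hz; exact absurd hz Sum.not_inl_le_inr
    choose g hg using hall
    refine ⟨g, ?_, ?_⟩
    · intro a b hab
      have h1 := hf' a b hab
      rw [hg a, hg b] at h1
      exact Sum.inr_le_inr_iff.mp h1
    · intro z
      have h1 := hfl z
      rw [hg z] at h1
      exact h1

/-- A map from `p₀ X` into a countable disjoint union lands in a single component. -/
theorem p0_hle_of_hle_unionN {X : LPoset 2} {F : ℕ → LPoset 2}
    (h : (p0 X).Hle (unionN F)) : ∃ m, (p0 X).Hle (F m) := by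
  obtain ⟨f, hf, hfl⟩ := h
  have hf' : ∀ a b : WithTop X.carrier, a ≤ b → f a ≤ f b := fun _ _ hab => hf hab
  rcases htop : f (⊤ : WithTop X.carrier) with ⟨m, u⟩
  refine ⟨m, ?_⟩
  have hall : ∀ z : WithTop X.carrier, ∃ v : (F m).carrier,
      f z = (⟨m, v⟩ : Σ n, (F n).carrier) := by
    intro z
    have hz : f z ≤ f (⊤ : WithTop X.carrier) := hf' z ⊤ le_top
    rw [htop] at hz
    obtain ⟨v, hv, -⟩ := sigma_le_mk hz
    exact ⟨v, hv⟩
  choose g hg using hall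
  refine ⟨g, ?_, ?_⟩
  · intro a b hab
    have h1 := hf' a b hab
    rw [hg a, hg b] at h1
    exact (Sigma.mk_le_mk_iff (α := fun n => (F n).carrier)).mp h1
  · intro z
    have h1 := hfl z
    rw [hg z] at h1
    exact h1

end LPoset

end Helpers

section Main

open LPoset

/-- The inductive invariant: `T` is `≤ₕ`-monotone below `β`, `T β ≤ₕ p₀(T̄_β)`, and
`T β` is not `≤ₕ` its own bar. -/
def GoodT (T : Ordinal → LPoset 2) (β : Ordinal) : Prop :=
  (∀ α, α < β → (T α).Hle (T β) ∧ (T α).bar.Hle (T β)) ∧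
  (T β).Hle (p0 (T β).bar) ∧
  ¬ (T β).Hle (T β).bar

theorem goodT_all (T : Ordinal → LPoset 2)
    (h0 : (T 0).Heq (LPoset.single 0))
    (hsucc : ∀ α : Ordinal, α < (Cardinal.aleph 1).ord →
      (T (α + 1)).Heq (LPoset.p0 (T α).bar))
    (hlim : ∀ lam : Ordinal, lam < (Cardinal.aleph 1).ord → Order.IsSuccLimit lam →
      ∃ a : ℕ → Ordinal, StrictMono a ∧ (∀ n, ¬ OrdEven (a n)) ∧ (⨆ n, a n) = lam ∧
        (T lam).Heq (LPoset.p0 (LPoset.unionN fun n => (T (a n)).bar))) :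
    ∀ β, β < (Cardinal.aleph 1).ord → GoodT T β := by
  intro β
  induction β using Ordinal.induction with
  | h β IH =>
  intro hβ
  rcases Ordinal.zero_or_succ_or_isSuccLimit β with rfl | ⟨γ, rfl⟩ | hlb
  · -- zero case
    refine ⟨fun α hα => absurd hα (not_lt_zero (a := α)), ?_, ?_⟩
    · exact htrans h0.1 (single_zero_hle_p0 _)
    · intro habs
      have h1 : (single 0 : LPoset 2).Hle (bar (single 0)) :=
        htrans (htrans h0.2 habs) (bar_mono h0.1)
      obtain ⟨f, -, hfl⟩ := h1
      have h2 : (1 : Fin 2) - 0 = (0 : Fin 2) := hfl PUnit.unit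
      exact absurd h2 (by decide)
  · -- successor case
    rw [← Ordinal.add_one_eq_succ] at hβ ⊢
    have hγlt : γ < γ + 1 := by
      rw [Ordinal.add_one_eq_succ]; exact Order.lt_succ γ
    have hγω : γ < (Cardinal.aleph 1).ord := hγlt.trans hβ
    have heq := hsucc γ hγω
    have IHγ : GoodT T γ := IH γ (Order.lt_succ γ) hγω
    have hTγ : (T γ).Hle (T (γ + 1)) := htrans IHγ.2.1 heq.2
    have hTbγ : (T γ).bar.Hle (T (γ + 1)) := htrans (hle_p0 (T γ).bar) heq.2
    have hmon : ∀ α, α < γ + 1 → (T α).Hle (T (γ + 1)) ∧ (T α).bar.Hle (T (γ + 1)) := by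
      intro α hα
      have hα' : α ≤ γ := by
        rw [Ordinal.add_one_eq_succ] at hα
        exact Order.lt_succ_iff_of_not_isMax (not_isMax γ) |>.mp hα
      rcases hα'.lt_or_eq with hlt | rfl
      · obtain ⟨ha1, ha2⟩ := IHγ.1 α hlt
        exact ⟨htrans ha1 hTγ, htrans ha2 hTγ⟩
      · exact ⟨hTγ, hTbγ⟩
    refine ⟨hmon, htrans heq.1 (p0_mono (bar_mono hTγ)), ?_⟩
    intro habs
    have h1 : (p0 (T γ).bar).Hle (bar (p0 (T γ).bar)) :=
      htrans heq.2 (htrans habs (bar_mono heq.1))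
    have h2 := p0_hle_bar_of_p0_hle_bar_p0 h1
    have h3 : (T γ).bar.Hle (T γ) :=
      htrans (htrans (hle_p0 (T γ).bar) h2) (bar_bar_hle (T γ))
    exact not_bar_hle IHγ.2.2 h3
  · -- limit case
    obtain ⟨a, hamono, -, hsup, hheq⟩ := hlim β hβ hlb
    have haβ : ∀ n, a n < β := by
      intro n
      have h1 : a n < a (n + 1) := hamono (Nat.lt_succ_self n)
      have h2 : a (n + 1) ≤ β := hsup ▸ le_ciSup (Ordinal.bddAbove_range a) (n + 1)
      exact h1.trans_le h2
    have hex : ∀ α, α < β → ∃ n, α < a n := by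
      intro α hα
      by_contra hc
      push_neg at hc
      have h1 : (⨆ n, a n) ≤ α := ciSup_le hc
      rw [hsup] at h1
      exact absurd hα (not_lt.mpr h1)
    have hcomp : ∀ n, (T (a n)).bar.Hle (T β) := fun n =>
      htrans (htrans (hle_unionN (fun n => (T (a n)).bar) n)
        (hle_p0 (unionN fun n => (T (a n)).bar))) hheq.2
    have hmon : ∀ α, α < β → (T α).Hle (T β) ∧ (T α).bar.Hle (T β) := by
      intro α hα
      obtain ⟨n, hn⟩ := hex α hα
      have IHn := IH (a n) (haβ n) ((haβ n).trans hβ)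
      obtain ⟨hm1, hm2⟩ := IHn.1 α hn
      exact ⟨htrans (htrans (hle_bar_bar (T α)) (bar_mono hm2)) (hcomp n),
        htrans (bar_mono hm1) (hcomp n)⟩
    have hE : (T β).Hle (p0 (T β).bar) := by
      refine htrans hheq.1 (p0_mono ?_)
      exact unionN_hle fun n => bar_mono (hmon (a n) (haβ n)).1
    refine ⟨hmon, hE, ?_⟩
    intro habs
    have h1 : (p0 (unionN fun n => (T (a n)).bar)).Hle
        (bar (p0 (unionN fun n => (T (a n)).bar))) :=
      htrans hheq.2 (htrans habs (bar_mono hheq.1))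
    have h2 := p0_hle_bar_of_p0_hle_bar_p0 h1
    have h3 := htrans h2 (bar_unionN_hle fun n => (T (a n)).bar)
    obtain ⟨m, hm⟩ := p0_hle_of_hle_unionN h3
    have h4 : (T (a m)).bar.Hle (T (a m)) :=
      htrans (htrans (htrans (hle_unionN (fun n => (T (a n)).bar) m)
        (hle_p0 (unionN fun n => (T (a n)).bar))) hm) (bar_bar_hle (T (a m)))
    exact not_bar_hle (IH (a m) (haβ m) ((haβ m).trans hβ)).2.2 h4

end Main

/-- For any family `{T_α}` of canonical 2-labeled trees, i.e. satisfying the defining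
recursion (`T₀` a singleton labeled 0, `T_{α+1} ≡ p₀(T̄_α)`, and at limits
`T_λ ≡ p₀(⨆_n T̄_{αₙ})` for odd ordinals `α₀ < α₁ < ⋯` with supremum `λ`), we have:
for all `α < β < ω₁`, `T_α ⊔ T̄_α <_h T_β`, and `T_α`, `T̄_α` are `≤_h`-incomparable. -/
theorem canonical_trees_strict_increasing (T : Ordinal → LPoset 2)
    (h0 : (T 0).Heq (LPoset.single 0))
    (hsucc : ∀ α : Ordinal, α < (Cardinal.aleph 1).ord →
      (T (α + 1)).Heq (LPoset.p0 (T α).bar))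
    (hlim : ∀ lam : Ordinal, lam < (Cardinal.aleph 1).ord → Order.IsSuccLimit lam →
      ∃ a : ℕ → Ordinal, StrictMono a ∧ (∀ n, ¬ OrdEven (a n)) ∧ (⨆ n, a n) = lam ∧
        (T lam).Heq (LPoset.p0 (LPoset.unionN fun n => (T (a n)).bar))) :
    ∀ α β : Ordinal, α < β → β < (Cardinal.aleph 1).ord →
      (LPoset.sum (T α) (T α).bar).Hlt (T β) ∧
      ¬ (T α).Hle (T α).bar ∧ ¬ (T α).bar.Hle (T α) := by
  intro α β hαβ hβ
  have hα : α < (Cardinal.aleph 1).ord := hαβ.trans hβ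
  have Gβ := goodT_all T h0 hsucc hlim β hβ
  have Gα := goodT_all T h0 hsucc hlim α hα
  have hA : ¬ (T α).Hle (T α).bar := Gα.2.2
  have hA' : ¬ (T α).bar.Hle (T α) := LPoset.not_bar_hle hA
  obtain ⟨h1, h2⟩ := Gβ.1 α hαβ
  refine ⟨⟨LPoset.sum_hle h1 h2, ?_⟩, hA, hA'⟩
  intro habs
  obtain ⟨Z, hZ1, hZ2⟩ : ∃ Z : LPoset 2, (T β).Hle (LPoset.p0 Z) ∧ (LPoset.p0 Z).Hle (T β) := by
    rcases Ordinal.zero_or_succ_or_isSuccLimit β with rfl | ⟨γ, rfl⟩ | hlb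
    · exact absurd hαβ (not_lt_zero (a := α))
    · have hγ : γ < (Cardinal.aleph 1).ord := (Order.lt_succ γ).trans hβ
      have h' := hsucc γ hγ
      rw [Ordinal.add_one_eq_succ] at h'
      exact ⟨_, h'.1, h'.2⟩
    · obtain ⟨a, -, -, -, hheq⟩ := hlim β hβ hlb
      exact ⟨_, hheq.1, hheq.2⟩
  have hsum : (LPoset.p0 Z).Hle (LPoset.sum (T α) (T α).bar) := LPoset.htrans hZ2 habs
  rcases LPoset.p0_hle_of_hle_sum hsum with hc | hc
  · exact hA' (LPoset.htrans h2 (LPoset.htrans hZ1 hc))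
  · exact hA (LPoset.htrans h1 (LPoset.htrans hZ1 hc))
end
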